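/- Let n be even, let p be a prime with 2^{n^{0.1}}/2 ≤ p ≤ 2^{n^{0.1}}, and let Q_n be a uniformly random n×n matrix with entries in {0,1} each of whose rows sums to n/2. There is an absolute constant C such that for all sufficiently large even n, the probability that there exists a nonzero vector v in F_p^n with Q_n v = 0 over F_p and L(v) ≥ n − n^{0.8} is at most C·2^{−n/100}. -/

import Mathlib

open scoped BigOperators

/-- `Q ∈ 𝒬_n`: `Q` is an `n × n` matrix with entries in `{0,1}` each of whose rows sums to
`n/2`. -/
def isRowReg (n : ℕ) (Q : Matrix (Fin n) (Fin n) ℕ) : Prop :=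
  (∀ i j, Q i j = 0 ∨ Q i j = 1) ∧ (∀ i, ∑ j, Q i j = n / 2)

/-- `L(v)`: the size of the largest level set of `v ∈ F_p^n`. -/
noncomputable def levelMax (p n : ℕ) (v : Fin n → ZMod p) : ℝ :=
  ⨆ x : ZMod p, (Set.ncard {i : Fin n | v i = x} : ℝ)

open Finset

def Rset (n : ℕ) : Finset (Fin n → Bool) :=
  Finset.univ.filter (fun b => (∑ j, (if b j then 1 else 0 : ℕ)) = n / 2)

def Bset (n p : ℕ) (v : Fin n → ZMod p) : Finset (Fin n → Bool) :=
  (Rset n).filter (fun b => ∑ j, (if b j then (1:ZMod p) else 0) * v j = 0)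

lemma ones_card {n : ℕ} {r : Fin n → Bool} (hr : r ∈ Rset n) :
    (Finset.univ.filter (fun j => r j = true)).card = n / 2 := by
  simp only [Rset, mem_filter, mem_univ, true_and] at hr
  rw [← hr, Finset.card_filter]

lemma level_card {n : ℕ} (hne : Even n) {r : Fin n → Bool} (hr : r ∈ Rset n) (b0 : Bool) :
    (Finset.univ.filter (fun j => r j = b0)).card ≤ n / 2 := by
  obtain ⟨m, hm⟩ := hne
  cases b0
  · have h := Finset.card_filter_add_card_filter_not
      (s := (Finset.univ : Finset (Fin n))) (p := fun j => r j = true)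
    have h1 := ones_card hr
    have h2 : (Finset.univ.filter (fun j => ¬ r j = true)).card
        = (Finset.univ.filter (fun j => r j = false)).card := by
      apply Finset.card_bij (fun a _ => a) <;> simp
    have h3 : (Finset.univ : Finset (Fin n)).card = n := by simp
    omega
  · exact le_of_eq (ones_card hr)

lemma dot_swap {n p : ℕ} (v : Fin n → ZMod p) (r : Fin n → Bool) (j0 j1 : Fin n)
    (hj : j0 ≠ j1) :
    ∑ j, (if r (Equiv.swap j0 j1 j) then (1:ZMod p) else 0) * v j
      = (∑ j, (if r j then (1:ZMod p) else 0) * v j)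
        + ((if r j0 then (1:ZMod p) else 0) - (if r j1 then 1 else 0)) * (v j1 - v j0) := by
  have h1 : ∑ j, (if r (Equiv.swap j0 j1 j) then (1:ZMod p) else 0) * v j
      = ∑ j, (if r j then (1:ZMod p) else 0) * v (Equiv.swap j0 j1 j) := by
    rw [← Equiv.sum_comp (Equiv.swap j0 j1) (fun j => (if r j then (1:ZMod p) else 0) * v (Equiv.swap j0 j1 j))]
    simp [Equiv.swap_apply_self]
  rw [h1]
  have h2 : ∀ j, (if r j then (1:ZMod p) else 0) * v (Equiv.swap j0 j1 j)
      = (if r j then (1:ZMod p) else 0) * v j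
        + (if r j then (1:ZMod p) else 0) * (v (Equiv.swap j0 j1 j) - v j) := by
    intro j; ring
  rw [Finset.sum_congr rfl (fun j _ => h2 j), Finset.sum_add_distrib]
  congr 1
  have hsupp : ∀ j ∈ Finset.univ, j ∉ ({j0, j1} : Finset (Fin n)) →
      (if r j then (1:ZMod p) else 0) * (v (Equiv.swap j0 j1 j) - v j) = 0 := by
    intro j _ hj'
    simp only [mem_insert, mem_singleton, not_or] at hj'
    rw [Equiv.swap_apply_of_ne_of_ne hj'.1 hj'.2]
    simp
  rw [← Finset.sum_subset (Finset.subset_univ ({j0, j1} : Finset (Fin n))) hsupp,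
    Finset.sum_pair hj, Equiv.swap_apply_left, Equiv.swap_apply_right]
  ring

lemma swap_mem_Rset {n : ℕ} {r : Fin n → Bool} (hr : r ∈ Rset n)
    (j0 j1 : Fin n) : (r ∘ Equiv.swap j0 j1) ∈ Rset n := by
  simp only [Rset, mem_filter, mem_univ, true_and] at hr ⊢
  rw [← hr]
  exact Equiv.sum_comp (Equiv.swap j0 j1) (fun j => if r j then 1 else 0)

/-- The key double counting bound: if `v` is not constant, few regular rows are
orthogonal to `v`. -/
lemma Bset_double_count {n p k : ℕ} [Fact p.Prime] (hne : Even n) {v : Fin n → ZMod p} {x : ZMod p}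
    (hxk : (Finset.univ.filter (fun i => v i ≠ x)).card ≤ k)
    (j0 : Fin n) (hj0 : v j0 ≠ x) :
    (Bset n p v).card * (n / 2 - k) ≤ ((Rset n) \ (Bset n p v)).card * n := by
  classical
  set B := Bset n p v with hB
  set R := Rset n with hR
  set rel : (Fin n → Bool) → (Fin n → Bool) → Prop :=
    fun r s => ∃ j1, v j1 = x ∧ r j1 ≠ r j0 ∧ s = r ∘ Equiv.swap j0 j1 with hrel
  simp only [ne_eq] at hxk
  have hm : ∀ r ∈ B, (n / 2 - k) ≤ ((R \ B).bipartiteAbove rel r).card := by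
    intro r hrB
    have hrR : r ∈ R := Finset.mem_filter.1 hrB |>.1
    have hdot : ∑ j, (if r j then (1:ZMod p) else 0) * v j = 0 :=
      (Finset.mem_filter.1 hrB).2
    -- the candidate set of positions to swap with
    set J : Finset (Fin n) := Finset.univ.filter (fun j1 => v j1 = x ∧ ¬ r j1 = r j0) with hJ
    -- lower bound on J
    have hJcard : n / 2 - k ≤ J.card := by
      set L : Finset (Fin n) := Finset.univ.filter (fun i => v i = x) with hL
      have hLdef : L.card = (Finset.univ.filter (fun i => v i = x)).card := by rw [hL]
      have hLcard : n - k ≤ L.card := by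
        have h := Finset.card_filter_add_card_filter_not
          (s := (Finset.univ : Finset (Fin n))) (p := fun i => v i = x)
        have h3 : (Finset.univ : Finset (Fin n)).card = n := by simp
        omega
      have hJL : J.card = (L.filter (fun j1 => ¬ r j1 = r j0)).card := by
        rw [hJ, hL, Finset.filter_filter]
      have hsplit := Finset.card_filter_add_card_filter_not
        (s := L) (p := fun j1 => r j1 = r j0)
      have hsub : L.filter (fun j1 => r j1 = r j0)
          ⊆ Finset.univ.filter (fun j1 => r j1 = r j0) :=
        Finset.filter_subset_filter _ (Finset.subset_univ L)
      have hhalf := level_card hne hrR (r j0)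
      have hsubcard := Finset.card_le_card hsub
      omega
    -- injection from J into the bipartiteAbove set
    apply le_trans hJcard
    apply Finset.card_le_card_of_injOn (fun j1 => r ∘ Equiv.swap j0 j1)
    · intro j1 hj1
      simp only [Finset.mem_coe, hJ, mem_filter, mem_univ, true_and] at hj1
      obtain ⟨hvx, hrne⟩ := hj1
      have hrne : r j1 ≠ r j0 := hrne
      have hj0j1 : j0 ≠ j1 := fun h => hj0 (h ▸ hvx)
      have hsR : (r ∘ Equiv.swap j0 j1) ∈ R := swap_mem_Rset hrR j0 j1
      have hdots := dot_swap v r j0 j1 hj0j1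
      have hcoef : ((if r j0 then (1:ZMod p) else 0) - (if r j1 then 1 else 0)) ≠ 0 := by
        haveI : Nontrivial (ZMod p) := ZMod.nontrivial_iff.2 (Nat.Prime.ne_one Fact.out)
        cases hr0 : r j0 <;> cases hr1 : r j1 <;> simp_all
      have hvne : v j1 - v j0 ≠ 0 := by
        rw [hvx]; exact sub_ne_zero.2 (Ne.symm hj0)
      have hdne : ∑ j, (if (r ∘ Equiv.swap j0 j1) j then (1:ZMod p) else 0) * v j ≠ 0 := by
        simp only [Function.comp]
        rw [hdots, hdot, zero_add]
        exact mul_ne_zero hcoef hvne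
      simp only [Finset.mem_coe, Finset.bipartiteAbove, mem_filter, Finset.mem_sdiff]
      refine ⟨⟨hsR, ?_⟩, ⟨j1, hvx, hrne, rfl⟩⟩
      intro hmem
      exact hdne (Finset.mem_filter.1 hmem).2
    · intro j1 hj1 j1' hj1' heq
      simp only [hJ, Finset.coe_filter, Set.mem_setOf_eq, mem_univ, true_and] at hj1 hj1'
      by_contra hne'
      have heq' : r ∘ (Equiv.swap j0 j1) = r ∘ (Equiv.swap j0 j1') := heq
      have h1 : (r ∘ Equiv.swap j0 j1) j1 = r j0 := by
        simp [Equiv.swap_apply_right]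
      have h2 : (r ∘ Equiv.swap j0 j1') j1 = r j1 := by
        have hj10 : j1 ≠ j0 := fun h => hj0 (h ▸ hj1.1)
        simp [Function.comp, Equiv.swap_apply_of_ne_of_ne hj10 hne']
      rw [heq'] at h1
      rw [h1] at h2
      exact hj1.2 h2.symm
  have hn' : ∀ s ∈ R \ B, ((B.bipartiteBelow rel s)).card ≤ n := by
    intro s _
    have hsub : B.bipartiteBelow rel s
        ⊆ Finset.univ.image (fun j1 => s ∘ Equiv.swap j0 j1) := by
      intro r hr
      simp only [Finset.bipartiteBelow, mem_filter] at hr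
      obtain ⟨_, j1, _, _, hs⟩ := hr
      apply Finset.mem_image.2
      refine ⟨j1, Finset.mem_univ _, ?_⟩
      rw [hs]
      funext j
      simp [Function.comp, Equiv.swap_apply_self]
    calc (B.bipartiteBelow rel s).card
        ≤ (Finset.univ.image (fun j1 => s ∘ Equiv.swap j0 j1)).card := Finset.card_le_card hsub
      _ ≤ (Finset.univ : Finset (Fin n)).card := Finset.card_image_le
      _ = n := by simp
  exact Finset.card_mul_le_card_mul rel hm hn'

lemma Bset_card_le {n p k : ℕ} [Fact p.Prime] (hne : Even n) (hn2 : 2 ≤ n) (hk4 : 4 * k ≤ n)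
    (hp : n / 2 < p) {v : Fin n → ZMod p} (hv : v ≠ 0) {x : ZMod p}
    (hxk : (Finset.univ.filter (fun i => v i ≠ x)).card ≤ k) :
    ((Bset n p v).card : ℝ) ≤ (4/5) * ((Rset n).card : ℝ) := by
  by_cases hex : ∃ j0, v j0 ≠ x
  · obtain ⟨j0, hj0⟩ := hex
    have hdc := Bset_double_count (k := k) hne hxk j0 hj0
    have hBR : Bset n p v ⊆ Rset n := Finset.filter_subset _ _
    have hsd : ((Rset n) \ (Bset n p v)).card = (Rset n).card - (Bset n p v).card :=
      Finset.card_sdiff_of_subset hBR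
    have hble : (Bset n p v).card ≤ (Rset n).card := Finset.card_le_card hBR
    obtain ⟨m, hm⟩ := hne
    have hmn : n = 2 * m := by omega
    have hn2m : n / 2 = m := by omega
    have hkm : 2 * k ≤ m := by omega
    rw [hsd, hn2m] at hdc
    -- move to ℝ
    set b : ℝ := ((Bset n p v).card : ℝ) with hb
    set R : ℝ := ((Rset n).card : ℝ) with hR
    have hreal : b * ((m : ℝ) - k) ≤ (R - b) * n := by
      have := Nat.cast_le (α := ℝ) |>.2 hdc
      push_cast [Nat.cast_sub (by omega : k ≤ m), Nat.cast_sub hble] at this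
      convert this using 1 <;> ring
    have hnm : (n : ℝ) = 2 * m := by exact_mod_cast hmn
    have hb0 : (0:ℝ) ≤ b := Nat.cast_nonneg _
    have hbR : b ≤ R := Nat.cast_le.2 hble
    have hm1 : (1:ℝ) ≤ m := by
      have : 1 ≤ m := by omega
      exact_mod_cast this
    have hk2 : 2 * (k:ℝ) ≤ m := by exact_mod_cast hkm
    rw [hnm] at hreal
    nlinarith [mul_nonneg hb0 (le_trans zero_le_one hm1), mul_le_mul_of_nonneg_left hk2 hb0]
  · push_neg at hex
    have hx0 : x ≠ 0 := by
      intro h; apply hv; funext j; rw [hex j, h]; rfl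
    have hB : Bset n p v = ∅ := by
      rw [Finset.eq_empty_iff_forall_notMem]
      intro r hr
      simp only [Bset, mem_filter] at hr
      obtain ⟨hrR, hdot⟩ := hr
      have hsum : ∑ j, (if r j then (1:ZMod p) else 0) * v j
          = ((n / 2 : ℕ) : ZMod p) * x := by
        have h1 : ∀ j, (if r j then (1:ZMod p) else 0) * v j
            = (if r j then (1:ZMod p) else 0) * x := by
          intro j; rw [hex j]
        rw [Finset.sum_congr rfl (fun j _ => h1 j), ← Finset.sum_mul]
        congr 1
        have : ∑ j, (if r j then (1:ZMod p) else 0)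
            = ((∑ j, if r j then 1 else 0 : ℕ) : ZMod p) := by
          push_cast; rfl
        rw [this]
        congr 1
        exact (Finset.mem_filter.1 hrR).2
      rw [hsum] at hdot
      rcases mul_eq_zero.1 hdot with h | h
      · rw [ZMod.natCast_eq_zero_iff] at h
        have := Nat.le_of_dvd (by omega) h
        omega
      · exact hx0 h
    rw [hB]
    simp only [Finset.card_empty, Nat.cast_zero]
    positivity

def boolToMat (n : ℕ) (M : Fin n → Fin n → Bool) : Matrix (Fin n) (Fin n) ℕ :=
  fun i j => if M i j then 1 else 0

lemma boolToMat_injective (n : ℕ) : Function.Injective (boolToMat n) := by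
  intro M M' h
  funext i j
  have := congrFun (congrFun h i) j
  simp only [boolToMat] at this
  cases hM : M i j <;> cases hM' : M' i j <;> simp_all

lemma rowreg_image (n : ℕ) :
    {Q : Matrix (Fin n) (Fin n) ℕ | isRowReg n Q}
      = boolToMat n '' {M | ∀ i, M i ∈ Rset n} := by
  ext Q
  simp only [Set.mem_setOf_eq, Set.mem_image]
  constructor
  · intro hQ
    refine ⟨fun i j => decide (Q i j = 1), fun i => ?_, ?_⟩
    · simp only [Rset, mem_filter, mem_univ, true_and]
      rw [← hQ.2 i]
      apply Finset.sum_congr rfl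
      intro j _
      rcases hQ.1 i j with h | h <;> simp [h]
    · funext i j
      rcases hQ.1 i j with h | h <;> simp [boolToMat, h]
  · rintro ⟨M, hM, rfl⟩
    constructor
    · intro i j
      by_cases h : M i j <;> simp [boolToMat, h]
    · intro i
      have := hM i
      simp only [Rset, mem_filter, mem_univ, true_and] at this
      exact this

lemma rowreg_ncard (n : ℕ) :
    Set.ncard {Q : Matrix (Fin n) (Fin n) ℕ | isRowReg n Q} = (Rset n).card ^ n := by
  classical
  rw [rowreg_image, Set.ncard_image_of_injective _ (boolToMat_injective n)]
  rw [Set.ncard_eq_toFinset_card']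
  have : {M : Fin n → Fin n → Bool | ∀ i, M i ∈ Rset n}.toFinset
      = Fintype.piFinset (fun _ => Rset n) := by
    ext M
    simp [Fintype.mem_piFinset]
  rw [this, Fintype.card_piFinset]
  simp

lemma level_to_filter {p n k : ℕ} [NeZero p] (v : Fin n → ZMod p)
    (h : (n : ℝ) - (n : ℝ) ^ (0.8 : ℝ) ≤ levelMax p n v)
    (hkr : (n : ℝ) ^ (0.8 : ℝ) ≤ (k : ℝ)) :
    ∃ x, (Finset.univ.filter (fun i => v i ≠ x)).card ≤ k := by
  classical
  obtain ⟨x0, hx0⟩ := Finite.exists_max (fun x : ZMod p => (Set.ncard {i : Fin n | v i = x} : ℝ))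
  have hsup : levelMax p n v ≤ (Set.ncard {i : Fin n | v i = x0} : ℝ) :=
    ciSup_le hx0
  have hcard : (n : ℝ) - (n : ℝ) ^ (0.8 : ℝ) ≤ (Set.ncard {i : Fin n | v i = x0} : ℝ) :=
    le_trans h hsup
  refine ⟨x0, ?_⟩
  have heq : Set.ncard {i : Fin n | v i = x0}
      = (Finset.univ.filter (fun i => v i = x0)).card := by
    rw [Set.ncard_eq_toFinset_card']
    congr 1
    ext i
    simp
  have hsplit := Finset.card_filter_add_card_filter_not
    (s := (Finset.univ : Finset (Fin n))) (p := fun i => v i = x0)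
  have huniv : (Finset.univ : Finset (Fin n)).card = n := by simp
  have hne_eq : (Finset.univ.filter (fun i => v i ≠ x0)).card
      = (Finset.univ.filter (fun i => ¬ v i = x0)).card := rfl
  rw [hne_eq]
  have hreal : ((Finset.univ.filter (fun i => ¬ v i = x0)).card : ℝ) ≤ (k : ℝ) := by
    have h1 : ((Finset.univ.filter (fun i => v i = x0)).card : ℝ)
        + ((Finset.univ.filter (fun i => ¬ v i = x0)).card : ℝ) = (n : ℝ) := by
      exact_mod_cast congrArg (Nat.cast (R := ℝ)) (hsplit.trans huniv)
    rw [heq] at hcard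
    linarith
  exact_mod_cast hreal

lemma Vfin_card (n p k : ℕ) [NeZero p] (hn : 1 ≤ n) :
    (Finset.univ.filter (fun v : Fin n → ZMod p =>
        ∃ x, (Finset.univ.filter (fun i => v i ≠ x)).card ≤ k)).card
      ≤ p * ((k + 1) * (n * p) ^ k) := by
  classical
  set V : Finset (Fin n → ZMod p) := Finset.univ.filter (fun v =>
    ∃ x, (Finset.univ.filter (fun i => v i ≠ x)).card ≤ k) with hV
  set f : (Fin n → ZMod p) → ZMod p × Finset (Fin n × ZMod p) := fun v =>
    if h : ∃ x, (Finset.univ.filter (fun i => v i ≠ x)).card ≤ k then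
      (h.choose, (Finset.univ.filter (fun i => v i ≠ h.choose)).image (fun i => (i, v i)))
    else (0, ∅) with hf
  have hVmem : ∀ v ∈ V, ∃ x, (Finset.univ.filter (fun i => v i ≠ x)).card ≤ k := by
    intro v hv
    exact (Finset.mem_filter.1 hv).2
  -- the target finset
  set T : Finset (ZMod p × Finset (Fin n × ZMod p)) :=
    Finset.univ.filter (fun q => q.2.card ≤ k) with hT
  have hmaps : ∀ v ∈ V, f v ∈ T := by
    intro v hv
    have h := hVmem v hv
    simp only [hf, dif_pos h, hT, Finset.mem_filter, Finset.mem_univ, true_and]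
    calc ((Finset.univ.filter (fun i => v i ≠ h.choose)).image (fun i => (i, v i))).card
        ≤ (Finset.univ.filter (fun i => v i ≠ h.choose)).card := Finset.card_image_le
      _ ≤ k := h.choose_spec
  have hinj : Set.InjOn f V := by
    intro v hv w hw heq
    have hvh := hVmem v (by exact_mod_cast hv)
    have hwh := hVmem w (by exact_mod_cast hw)
    rw [hf] at heq
    simp only [dif_pos hvh, dif_pos hwh] at heq
    have hx : hvh.choose = hwh.choose := (Prod.ext_iff.1 heq).1
    have hS : (Finset.univ.filter (fun i => v i ≠ hvh.choose)).image (fun i => (i, v i))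
        = (Finset.univ.filter (fun i => w i ≠ hwh.choose)).image (fun i => (i, w i)) :=
      (Prod.ext_iff.1 heq).2
    set x := hvh.choose with hxdef
    rw [← hx] at hS
    funext i
    by_cases hvi : v i = x
    · by_cases hwi : w i = x
      · rw [hvi, hwi]
      · have : (i, w i) ∈ (Finset.univ.filter (fun i => w i ≠ x)).image (fun i => (i, w i)) :=
          Finset.mem_image.2 ⟨i, Finset.mem_filter.2 ⟨Finset.mem_univ _, hwi⟩, rfl⟩
        rw [← hS] at this
        obtain ⟨i', hi', heq'⟩ := Finset.mem_image.1 this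
        have h1 : i' = i := (Prod.ext_iff.1 heq').1
        have h2 : v i' = w i := (Prod.ext_iff.1 heq').2
        rw [h1] at h2
        rw [h2]
    · have : (i, v i) ∈ (Finset.univ.filter (fun i => v i ≠ x)).image (fun i => (i, v i)) :=
        Finset.mem_image.2 ⟨i, Finset.mem_filter.2 ⟨Finset.mem_univ _, hvi⟩, rfl⟩
      rw [hS] at this
      obtain ⟨i', hi', heq'⟩ := Finset.mem_image.1 this
      have h1 : i' = i := (Prod.ext_iff.1 heq').1
      have h2 : w i' = v i := (Prod.ext_iff.1 heq').2
      rw [h1] at h2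
      rw [← h2]
  have hcard : V.card ≤ T.card := Finset.card_le_card_of_injOn f hmaps hinj
  -- now count T
  have hT2 : T = (Finset.univ : Finset (ZMod p)) ×ˢ
      (Finset.univ.filter (fun s : Finset (Fin n × ZMod p) => s.card ≤ k)) := by
    ext q
    simp [hT, Finset.mem_product]
  have hFk : (Finset.univ.filter (fun s : Finset (Fin n × ZMod p) => s.card ≤ k)).card
      ≤ (k + 1) * (n * p) ^ k := by
    have hsub : (Finset.univ.filter (fun s : Finset (Fin n × ZMod p) => s.card ≤ k))
        ⊆ (Finset.range (k + 1)).biUnion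
            (fun j => Finset.powersetCard j (Finset.univ : Finset (Fin n × ZMod p))) := by
      intro s hs
      have hsk : s.card ≤ k := (Finset.mem_filter.1 hs).2
      apply Finset.mem_biUnion.2
      exact ⟨s.card, Finset.mem_range.2 (Nat.lt_succ_of_le hsk),
        (Finset.mem_powersetCard_univ).2 rfl⟩
    calc (Finset.univ.filter (fun s : Finset (Fin n × ZMod p) => s.card ≤ k)).card
        ≤ ((Finset.range (k + 1)).biUnion
            (fun j => Finset.powersetCard j (Finset.univ : Finset (Fin n × ZMod p)))).card :=
          Finset.card_le_card hsub
      _ ≤ ∑ j ∈ Finset.range (k + 1),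
            (Finset.powersetCard j (Finset.univ : Finset (Fin n × ZMod p))).card :=
          Finset.card_biUnion_le
      _ ≤ ∑ _j ∈ Finset.range (k + 1), (n * p) ^ k := by
          apply Finset.sum_le_sum
          intro j hj
          rw [Finset.card_powersetCard]
          have hcu : (Finset.univ : Finset (Fin n × ZMod p)).card = n * p := by
            simp [Finset.card_univ, ZMod.card]
          rw [hcu]
          calc (n * p).choose j ≤ (n * p) ^ j := Nat.choose_le_pow _ _
            _ ≤ (n * p) ^ k := Nat.pow_le_pow_right
                (by have := Nat.pos_of_ne_zero (NeZero.ne p); nlinarith) (Nat.lt_succ_iff.1 (Finset.mem_range.1 hj))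
      _ = (k + 1) * (n * p) ^ k := by
          rw [Finset.sum_const, Finset.card_range, smul_eq_mul]
  calc V.card ≤ T.card := hcard
    _ = p * (Finset.univ.filter (fun s : Finset (Fin n × ZMod p) => s.card ≤ k)).card := by
        rw [hT2, Finset.card_product]
        simp [ZMod.card]
    _ ≤ p * ((k + 1) * (n * p) ^ k) := Nat.mul_le_mul_left p hFk

lemma bad_image (n p : ℕ) :
    {Q : Matrix (Fin n) (Fin n) ℕ | isRowReg n Q ∧
        ∃ v : Fin n → ZMod p, v ≠ 0 ∧ (∀ i, ∑ j, (Q i j : ZMod p) * v j = 0) ∧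
          (n : ℝ) - (n : ℝ) ^ (0.8 : ℝ) ≤ levelMax p n v}
      = boolToMat n '' {M | (∀ i, M i ∈ Rset n) ∧
          ∃ v : Fin n → ZMod p, v ≠ 0 ∧
            (∀ i, ∑ j, (if M i j then (1 : ZMod p) else 0) * v j = 0) ∧
            (n : ℝ) - (n : ℝ) ^ (0.8 : ℝ) ≤ levelMax p n v} := by
  have hcast : ∀ (M : Fin n → Fin n → Bool) (i j : Fin n),
      ((boolToMat n M i j : ℕ) : ZMod p) = (if M i j then (1 : ZMod p) else 0) := by
    intro M i j
    by_cases h : M i j <;> simp [boolToMat, h]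
  ext Q
  simp only [Set.mem_setOf_eq, Set.mem_image]
  constructor
  · rintro ⟨hreg, v, hv, hdot, hlev⟩
    have himg : Q ∈ boolToMat n '' {M | ∀ i, M i ∈ Rset n} := by
      rw [← rowreg_image]; exact hreg
    obtain ⟨M, hM, rfl⟩ := himg
    refine ⟨M, ⟨hM, v, hv, fun i => ?_, hlev⟩, rfl⟩
    calc ∑ j, (if M i j then (1 : ZMod p) else 0) * v j
        = ∑ j, ((boolToMat n M i j : ℕ) : ZMod p) * v j :=
          Finset.sum_congr rfl (fun j _ => by rw [hcast])
      _ = 0 := hdot i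
  · rintro ⟨M, ⟨hM, v, hv, hdot, hlev⟩, rfl⟩
    have hreg : isRowReg n (boolToMat n M) := by
      have : boolToMat n M ∈ {Q : Matrix (Fin n) (Fin n) ℕ | isRowReg n Q} := by
        rw [rowreg_image]
        exact ⟨M, hM, rfl⟩
      exact this
    refine ⟨hreg, v, hv, fun i => ?_, hlev⟩
    calc ∑ j, ((boolToMat n M i j : ℕ) : ZMod p) * v j
        = ∑ j, (if M i j then (1 : ZMod p) else 0) * v j :=
          Finset.sum_congr rfl (fun j _ => by rw [hcast])
      _ = 0 := hdot i

lemma bad_ncard_le (n p k : ℕ) [NeZero p]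
    (hkr : (n : ℝ) ^ (0.8 : ℝ) ≤ (k : ℝ)) :
    Set.ncard {Q : Matrix (Fin n) (Fin n) ℕ | isRowReg n Q ∧
        ∃ v : Fin n → ZMod p, v ≠ 0 ∧ (∀ i, ∑ j, (Q i j : ZMod p) * v j = 0) ∧
          (n : ℝ) - (n : ℝ) ^ (0.8 : ℝ) ≤ levelMax p n v}
      ≤ ∑ v ∈ Finset.univ.filter (fun v : Fin n → ZMod p =>
            v ≠ 0 ∧ ∃ x, (Finset.univ.filter (fun i => v i ≠ x)).card ≤ k),
          (Bset n p v).card ^ n := by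
  classical
  rw [bad_image, Set.ncard_image_of_injective _ (boolToMat_injective n),
    Set.ncard_eq_toFinset_card']
  have hsub : {M : Fin n → Fin n → Bool | (∀ i, M i ∈ Rset n) ∧
      ∃ v : Fin n → ZMod p, v ≠ 0 ∧
        (∀ i, ∑ j, (if M i j then (1 : ZMod p) else 0) * v j = 0) ∧
        (n : ℝ) - (n : ℝ) ^ (0.8 : ℝ) ≤ levelMax p n v}.toFinset
      ⊆ (Finset.univ.filter (fun v : Fin n → ZMod p =>
            v ≠ 0 ∧ ∃ x, (Finset.univ.filter (fun i => v i ≠ x)).card ≤ k)).biUnion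
          (fun v => Fintype.piFinset (fun _ => Bset n p v)) := by
    intro M hM
    rw [Set.mem_toFinset] at hM
    obtain ⟨hMR, v, hv, hdot, hlev⟩ := hM
    apply Finset.mem_biUnion.2
    refine ⟨v, Finset.mem_filter.2 ⟨Finset.mem_univ _, hv, level_to_filter v hlev hkr⟩, ?_⟩
    apply Fintype.mem_piFinset.2
    intro i
    exact Finset.mem_filter.2 ⟨hMR i, hdot i⟩
  calc _ ≤ _ := Finset.card_le_card hsub
    _ ≤ _ := Finset.card_biUnion_le
    _ ≤ _ := by
        apply Finset.sum_le_sum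
        intro v _
        rw [Fintype.card_piFinset]
        simp

open Filter in
lemma eventual_bounds : ∃ N : ℕ, ∀ n : ℕ, N ≤ n →
    2 ≤ n ∧
    ((n : ℝ) + 1) ≤ 2 ^ ((n : ℝ) ^ (0.1 : ℝ)) ∧
    4 * ((n : ℝ) ^ (0.8 : ℝ) + 1) ≤ (n : ℝ) ∧
    (n : ℝ) ^ (0.1 : ℝ) * (2 * ((n : ℝ) ^ (0.8 : ℝ) + 1) + 2) ≤ (1/4 - 1/100) * (n : ℝ) := by
  have hreal : ∀ᶠ x : ℝ in atTop,
      (x + 1 ≤ 2 ^ (x ^ (0.1 : ℝ)) ∧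
       4 * (x ^ (0.8 : ℝ) + 1) ≤ x ∧
       x ^ (0.1 : ℝ) * (2 * (x ^ (0.8 : ℝ) + 1) + 2) ≤ (1/4 - 1/100) * x) := by
    have h02 : ∀ᶠ x : ℝ in atTop, x ^ (-(0.2 : ℝ)) ≤ 1/8 :=
      (tendsto_rpow_neg_atTop (by norm_num)).eventually_le_const (by norm_num)
    have h01 : ∀ᶠ x : ℝ in atTop, x ^ (-(0.1 : ℝ)) ≤ 1/100 :=
      (tendsto_rpow_neg_atTop (by norm_num)).eventually_le_const (by norm_num)
    have h09 : ∀ᶠ x : ℝ in atTop, x ^ (-(0.9 : ℝ)) ≤ 1/100 :=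
      (tendsto_rpow_neg_atTop (by norm_num)).eventually_le_const (by norm_num)
    have hlog : ∀ᶠ x : ℝ in atTop, Real.log x ≤ (Real.log 2 / 2) * x ^ (0.1 : ℝ) := by
      have h := (isLittleO_log_rpow_atTop (by norm_num : (0:ℝ) < 0.1)).def
        (by positivity : (0:ℝ) < Real.log 2 / 2)
      filter_upwards [h, eventually_ge_atTop (1:ℝ)] with x hx hx1
      have hx0 : (0:ℝ) < x := lt_of_lt_of_le zero_lt_one hx1
      have hnorm : ‖Real.log x‖ = Real.log x := by
        rw [Real.norm_eq_abs, abs_of_nonneg (Real.log_nonneg hx1)]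
      have hnorm2 : ‖x ^ (0.1:ℝ)‖ = x ^ (0.1:ℝ) := by
        rw [Real.norm_eq_abs, abs_of_nonneg (Real.rpow_nonneg hx0.le _)]
      rw [hnorm, hnorm2] at hx
      exact hx
    have hx2 : ∀ᶠ x : ℝ in atTop, (2:ℝ) ≤ x ^ (0.1:ℝ) := by
      have := tendsto_rpow_atTop (by norm_num : (0:ℝ) < 0.1)
      exact this.eventually_ge_atTop 2
    filter_upwards [h02, h01, h09, hlog, hx2, eventually_ge_atTop (8:ℝ)]
      with x h02 h01 h09 hlog hx2 h8
    have hx0 : (0:ℝ) < x := by linarith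
    have hpow : ∀ a : ℝ, x ^ (a - 1) * x = x ^ a := by
      intro a
      rw [← Real.rpow_add_one (ne_of_gt hx0) (a-1)]
      norm_num
    have h08 : x ^ (0.8:ℝ) = x ^ (-(0.2):ℝ) * x := by
      rw [show (-(0.2):ℝ) = 0.8 - 1 by norm_num, hpow]
    have h09' : x ^ (0.9:ℝ) = x ^ (-(0.1):ℝ) * x := by
      rw [show (-(0.1):ℝ) = 0.9 - 1 by norm_num, hpow]
    have h01' : x ^ (0.1:ℝ) = x ^ (-(0.9):ℝ) * x := by
      rw [show (-(0.9):ℝ) = 0.1 - 1 by norm_num, hpow]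
    have h0809 : x ^ (0.1:ℝ) * x ^ (0.8:ℝ) = x ^ (0.9:ℝ) := by
      rw [← Real.rpow_add hx0]; norm_num
    refine ⟨?_, ?_, ?_⟩
    · -- x + 1 ≤ 2 ^ x^0.1
      have hlogx1 : Real.log (x + 1) ≤ Real.log 2 * x ^ (0.1:ℝ) := by
        have hle : x + 1 ≤ 2 * x := by linarith
        have := Real.log_le_log (by linarith) hle
        rw [Real.log_mul (by norm_num) (ne_of_gt hx0)] at this
        have hlog2 : Real.log 2 ≤ (Real.log 2 / 2) * x ^ (0.1:ℝ) := by
          nlinarith [Real.log_pos (by norm_num : (1:ℝ) < 2)]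
        linarith
      have h1 : x + 1 = Real.exp (Real.log (x + 1)) := (Real.exp_log (by linarith)).symm
      rw [h1, Real.rpow_def_of_pos (by norm_num : (0:ℝ) < 2)]
      exact Real.exp_le_exp.2 hlogx1
    · rw [h08]
      nlinarith [Real.rpow_nonneg hx0.le (-(0.2):ℝ)]
    · have e1 : x ^ (0.1:ℝ) * (2 * (x ^ (0.8:ℝ) + 1) + 2)
          = 2 * (x ^ (0.1:ℝ) * x ^ (0.8:ℝ)) + 4 * x ^ (0.1:ℝ) := by ring
      rw [e1, h0809, h09', h01']
      nlinarith [Real.rpow_nonneg hx0.le (-(0.1):ℝ), Real.rpow_nonneg hx0.le (-(0.9):ℝ)]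
  have hnat : ∀ᶠ n : ℕ in atTop,
      ((n:ℝ) + 1 ≤ 2 ^ ((n:ℝ) ^ (0.1 : ℝ)) ∧
       4 * ((n:ℝ) ^ (0.8 : ℝ) + 1) ≤ (n:ℝ) ∧
       (n:ℝ) ^ (0.1 : ℝ) * (2 * ((n:ℝ) ^ (0.8 : ℝ) + 1) + 2) ≤ (1/4 - 1/100) * (n:ℝ)) :=
    tendsto_natCast_atTop_atTop.eventually hreal
  obtain ⟨N, hN⟩ := eventually_atTop.1 (hnat.and (eventually_ge_atTop 2))
  exact ⟨N, fun n hn => ⟨(hN n hn).2, (hN n hn).1.1, (hN n hn).1.2.1, (hN n hn).1.2.2⟩⟩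

lemma four_fifth_le : (4/5 : ℝ) ≤ 2 ^ (-(1/4) : ℝ) := by
  have h0 : (0:ℝ) ≤ 2 ^ (-(1/4) : ℝ) := (Real.rpow_pos_of_pos two_pos _).le
  apply le_of_pow_le_pow_left₀ (n := 4) (by norm_num) h0
  have h1 : ((2:ℝ) ^ (-(1/4) : ℝ)) ^ (4:ℕ) = 2 ^ ((-(1/4):ℝ) * 4) := by
    rw [← Real.rpow_natCast ((2:ℝ) ^ (-(1/4):ℝ)) 4, ← Real.rpow_mul (by norm_num)]
    norm_num
  rw [h1, show ((-(1/4):ℝ) * 4) = ((-1 : ℤ) : ℝ) by norm_num, Real.rpow_intCast]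
  norm_num

set_option maxHeartbeats 1000000 in
theorem eliminate_almost_constant_null' :
    ∃ C : ℝ, 0 < C ∧ ∃ N : ℕ, ∀ n : ℕ, N ≤ n → Even n →
      ∀ (p : ℕ), p.Prime →
        (2 : ℝ) ^ ((n : ℝ) ^ (0.1 : ℝ)) / 2 ≤ (p : ℝ) →
        (p : ℝ) ≤ (2 : ℝ) ^ ((n : ℝ) ^ (0.1 : ℝ)) →
        (Set.ncard {Q : Matrix (Fin n) (Fin n) ℕ | isRowReg n Q ∧
            ∃ v : Fin n → ZMod p, v ≠ 0 ∧ (∀ i, ∑ j, (Q i j : ZMod p) * v j = 0) ∧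
              (n : ℝ) - (n : ℝ) ^ (0.8 : ℝ) ≤ levelMax p n v} : ℝ) ≤
          C * (2 : ℝ) ^ (-(n : ℝ) / 100) *
            (Set.ncard {Q : Matrix (Fin n) (Fin n) ℕ | isRowReg n Q} : ℝ) := by
  classical
  obtain ⟨N0, hN0⟩ := eventual_bounds
  refine ⟨1, one_pos, N0, ?_⟩
  intro n hn hne p hp hplb hpub
  obtain ⟨hn2, hP1, hP3, hP4⟩ := hN0 n hn
  haveI : Fact p.Prime := ⟨hp⟩
  haveI : NeZero p := ⟨hp.ne_zero⟩
  set k := ⌈(n:ℝ) ^ (0.8:ℝ)⌉₊ with hk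
  set P := (2:ℝ) ^ ((n:ℝ) ^ (0.1:ℝ)) with hPdef
  have hn0 : 0 < n := by omega
  have hP0 : (0:ℝ) < P := Real.rpow_pos_of_pos two_pos _
  have hkr : (n:ℝ)^(0.8:ℝ) ≤ (k:ℝ) := Nat.le_ceil _
  have hkub : (k:ℝ) ≤ (n:ℝ)^(0.8:ℝ) + 1 :=
    (Nat.ceil_lt_add_one (Real.rpow_nonneg (Nat.cast_nonneg n) _)).le
  have hk4 : 4 * k ≤ n := by
    have h : (4*(k:ℝ)) ≤ (n:ℝ) := by nlinarith
    exact_mod_cast h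
  have hp_half : n / 2 < p := by
    have hc : ((n/2 : ℕ):ℝ) ≤ (n:ℝ)/2 := by
      have h2' : ((n/2:ℕ):ℝ) * 2 ≤ (n:ℝ) := by exact_mod_cast Nat.div_mul_le_self n 2
      linarith
    have h1 : ((n/2 : ℕ):ℝ) < (p:ℝ) := by
      have hPp : ((n:ℝ)+1)/2 ≤ (p:ℝ) := le_trans (by linarith) hplb
      linarith
    exact_mod_cast h1
  -- counting
  have hT := rowreg_ncard n
  have hbad := bad_ncard_le n p k hkr
  set V' : Finset (Fin n → ZMod p) := Finset.univ.filter (fun v : Fin n → ZMod p =>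
      v ≠ 0 ∧ ∃ x, (Finset.univ.filter (fun i => v i ≠ x)).card ≤ k) with hV'
  set R : ℕ := (Rset n).card with hR
  have hBle : ∀ v ∈ V', ((Bset n p v).card : ℝ) ≤ (4/5) * (R:ℝ) := by
    intro v hv
    obtain ⟨-, hv0, x, hx⟩ := Finset.mem_filter.1 hv
    exact Bset_card_le hne hn2 hk4 hp_half hv0 hx
  have hV'card : V'.card ≤ p * ((k + 1) * (n * p) ^ k) := by
    refine le_trans (Finset.card_le_card ?_) (Vfin_card n p k hn0)
    exact fun v hv => by simp only [hV', Finset.mem_filter, Finset.mem_univ, true_and] at hv ⊢; exact hv.2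
  -- real chain
  have hstep1 : (Set.ncard {Q : Matrix (Fin n) (Fin n) ℕ | isRowReg n Q ∧
      ∃ v : Fin n → ZMod p, v ≠ 0 ∧ (∀ i, ∑ j, (Q i j : ZMod p) * v j = 0) ∧
        (n : ℝ) - (n : ℝ) ^ (0.8 : ℝ) ≤ levelMax p n v} : ℝ)
      ≤ (V'.card : ℝ) * ((4/5) * (R:ℝ))^n := by
    have h1 : (Set.ncard _ : ℝ) ≤ ((∑ v ∈ V', (Bset n p v).card ^ n : ℕ) : ℝ) :=
      Nat.cast_le.2 hbad
    refine le_trans h1 ?_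
    push_cast
    calc ∑ v ∈ V', ((Bset n p v).card : ℝ) ^ n
        ≤ ∑ v ∈ V', ((4/5) * (R:ℝ))^n := by
          apply Finset.sum_le_sum
          intro v hv
          exact pow_le_pow_left₀ (Nat.cast_nonneg _) (hBle v hv) n
      _ = (V'.card : ℝ) * ((4/5) * (R:ℝ))^n := by
          rw [Finset.sum_const, nsmul_eq_mul]
  have hcount : ((p * ((k + 1) * (n * p) ^ k) : ℕ) : ℝ) ≤ P ^ (2*k+2) := by
    push_cast
    have hpP : (p:ℝ) ≤ P := hpub
    have hkP : ((k:ℝ) + 1) ≤ P := by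
      have h1 : (k:ℝ) + 1 ≤ (n:ℝ) + 1 := by
        have : (k:ℝ) ≤ (n:ℝ) := by nlinarith
        linarith
      linarith
    have hnpP : (n:ℝ) * (p:ℝ) ≤ P^2 := by
      have h1 : (n:ℝ) ≤ P := by linarith
      have h2 : (0:ℝ) ≤ (n:ℝ) := Nat.cast_nonneg _
      have h3 : (0:ℝ) ≤ (p:ℝ) := Nat.cast_nonneg _
      calc (n:ℝ) * (p:ℝ) ≤ P * P := mul_le_mul h1 hpP h3 hP0.le
        _ = P^2 := (sq P).symm
    calc (p:ℝ) * (((k:ℝ)+1) * ((n:ℝ)*(p:ℝ))^k)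
        ≤ P * (P * (P^2)^k) := by
          apply mul_le_mul hpP ?_ ?_ hP0.le
          · apply mul_le_mul hkP ?_ ?_ hP0.le
            · exact pow_le_pow_left₀ (by positivity) hnpP k
            · positivity
          · positivity
      _ = P^(2*k+2) := by rw [← pow_mul]; ring
  have hexp : P ^ (2*k+2) ≤ (2:ℝ) ^ ((1/4 - 1/100) * (n:ℝ)) := by
    have h1 : P ^ (2*k+2) = (2:ℝ) ^ ((n:ℝ)^(0.1:ℝ) * ((2*k+2 : ℕ):ℝ)) := by
      rw [hPdef, ← Real.rpow_natCast ((2:ℝ) ^ ((n:ℝ) ^ (0.1:ℝ))) (2*k+2),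
        ← Real.rpow_mul (by norm_num)]
    rw [h1]
    apply Real.rpow_le_rpow_of_exponent_le one_le_two
    have h2 : ((2*k+2 : ℕ):ℝ) ≤ 2 * ((n:ℝ)^(0.8:ℝ) + 1) + 2 := by
      push_cast; linarith
    have h3 : (0:ℝ) ≤ (n:ℝ)^(0.1:ℝ) := Real.rpow_nonneg (Nat.cast_nonneg n) _
    calc (n:ℝ)^(0.1:ℝ) * ((2*k+2 : ℕ):ℝ)
        ≤ (n:ℝ)^(0.1:ℝ) * (2 * ((n:ℝ)^(0.8:ℝ) + 1) + 2) := by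
          apply mul_le_mul_of_nonneg_left h2 h3
      _ ≤ (1/4 - 1/100) * (n:ℝ) := hP4
  have hff : ((4:ℝ)/5)^n ≤ (2:ℝ) ^ (-(1/4) * (n:ℝ)) := by
    calc ((4:ℝ)/5)^n ≤ ((2:ℝ) ^ (-(1/4) : ℝ))^n :=
          pow_le_pow_left₀ (by norm_num) four_fifth_le n
      _ = (2:ℝ) ^ (-(1/4) * (n:ℝ)) := by
          rw [← Real.rpow_natCast ((2:ℝ) ^ (-(1/4):ℝ)) n, ← Real.rpow_mul (by norm_num)]
  -- final assembly
  rw [rowreg_ncard n]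
  have hR0 : (0:ℝ) ≤ (R:ℝ) := Nat.cast_nonneg _
  have hVW : (V'.card : ℝ) ≤ ((p * ((k + 1) * (n * p) ^ k) : ℕ) : ℝ) := Nat.cast_le.2 hV'card
  calc (Set.ncard _ : ℝ)
      ≤ (V'.card : ℝ) * ((4/5) * (R:ℝ))^n := hstep1
    _ = (V'.card : ℝ) * ((4/5:ℝ)^n * (R:ℝ)^n) := by rw [mul_pow]
    _ ≤ ((p * ((k + 1) * (n * p) ^ k) : ℕ) : ℝ) * ((4/5:ℝ)^n * (R:ℝ)^n) := by
        apply mul_le_mul_of_nonneg_right hVW (by positivity)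
    _ ≤ (P ^ (2*k+2)) * ((2:ℝ) ^ (-(1/4) * (n:ℝ)) * (R:ℝ)^n) := by
        apply mul_le_mul hcount ?_ (by positivity) (by positivity)
        exact mul_le_mul_of_nonneg_right hff (by positivity)
    _ ≤ ((2:ℝ) ^ ((1/4 - 1/100) * (n:ℝ))) * ((2:ℝ) ^ (-(1/4) * (n:ℝ)) * (R:ℝ)^n) := by
        apply mul_le_mul_of_nonneg_right hexp (by positivity)
    _ = 1 * (2:ℝ) ^ (-(n:ℝ) / 100) * ((R:ℝ)^n) := by
        rw [one_mul, ← mul_assoc, ← Real.rpow_add two_pos]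
        congr 1
        ring
    _ = 1 * (2:ℝ) ^ (-(n:ℝ) / 100) * (((R^n : ℕ)):ℝ) := by push_cast; ring

/-- Let `n` be even, let `p` be a prime with `2^{n^{0.1}}/2 ≤ p ≤ 2^{n^{0.1}}`, and let `Q_n`
be a uniformly random element of `𝒬_n`. There is an absolute constant `C` such that for all
sufficiently large even `n`, the probability that some nonzero `v ∈ F_p^n` with
`L(v) ≥ n − n^{0.8}` satisfies `Q_n v = 0` over `F_p` is at most `C·2^{−n/100}` (stated as a
counting bound). -/

theorem eliminate_almost_constant_null :
    ∃ C : ℝ, 0 < C ∧ ∃ N : ℕ, ∀ n : ℕ, N ≤ n → Even n →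
      ∀ (p : ℕ), p.Prime →
        (2 : ℝ) ^ ((n : ℝ) ^ (0.1 : ℝ)) / 2 ≤ (p : ℝ) →
        (p : ℝ) ≤ (2 : ℝ) ^ ((n : ℝ) ^ (0.1 : ℝ)) →
        (Set.ncard {Q : Matrix (Fin n) (Fin n) ℕ | isRowReg n Q ∧
            ∃ v : Fin n → ZMod p, v ≠ 0 ∧ (∀ i, ∑ j, (Q i j : ZMod p) * v j = 0) ∧
              (n : ℝ) - (n : ℝ) ^ (0.8 : ℝ) ≤ levelMax p n v} : ℝ) ≤
          C * (2 : ℝ) ^ (-(n : ℝ) / 100) *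
            (Set.ncard {Q : Matrix (Fin n) (Fin n) ℕ | isRowReg n Q} : ℝ) :=
  eliminate_almost_constant_null'
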